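/- arXiv:2108.10264 — 2 statements merged into one kernel-verified Lean document; each statement's English description precedes it below -/
import Mathlib

section
/- Let T be a taut ideal triangulation that is locally veering. Then T admits a (global) veering structure if and only if the realised manifold |T| is orientable. -/
open Set

noncomputable section

/-- An ideal triangulation with face pairings, presented combinatorially: a collection
of model tetrahedra (each with vertices labelled by `Fin 4`; face `i` is the face
opposite vertex `i`), a fixed-point free involutive face pairing, affine vertex
identifications along paired faces, and a taut angle structure: in each tetrahedron the
two edges of the pair `diag t` and its opposite pair have dihedral angle π, all other
edges have angle 0. -/
structure TautGlue where
  Tet : Type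
  glue : Tet × Fin 4 → Tet × Fin 4
  glueVert : Tet × Fin 4 → Equiv.Perm (Fin 4)
  glue_invol : Function.Involutive glue
  glue_ne : ∀ p, glue p ≠ p
  glueVert_face : ∀ p, glueVert p p.2 = (glue p).2
  glueVert_symm : ∀ p, glueVert (glue p) = (glueVert p)⁻¹
  diag : Tet → Sym2 (Fin 4)
  diag_nd : ∀ t, ¬ (diag t).IsDiag

namespace TautGlue

variable (T : TautGlue)

/-- The model edge `s` of the tetrahedron `t` has dihedral angle π: it is the chosen
diagonal or its opposite edge. -/
def IsPi (t : T.Tet) (s : Sym2 (Fin 4)) : Prop :=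
  s = T.diag t ∨ ∀ x, x ∈ s ↔ x ∉ T.diag t

/-- The cyclically ordered collection of model tetrahedra around an edge of the
realisation: this is the model edge neighbourhood `T_e`. -/
structure EdgeCycle (T : TautGlue) where
  n : ℕ
  t : ZMod (n + 1) → T.Tet
  s : ZMod (n + 1) → Sym2 (Fin 4)
  f : ZMod (n + 1) → Fin 4
  s_nd : ∀ i, ¬ (s i).IsDiag
  f_not_mem : ∀ i, f i ∉ s i
  glue_t : ∀ i, (T.glue (t i, f i)).1 = t (i + 1)
  maps_s : ∀ i, Sym2.map (⇑(T.glueVert (t i, f i))) (s i) = s (i + 1)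
  proper : ∀ i, (T.glue (t i, f i)).2 ≠ f (i + 1)

/-- The taut conditions on the triangulation: every model edge has a (finite) cycle of
tetrahedra around it, and around every edge the dihedral angles sum to 2π, that is,
exactly two of the models of the edge have angle π. -/
structure IsTaut (T : TautGlue) : Prop where
  around : ∀ (t₀ : T.Tet) (s₀ : Sym2 (Fin 4)), ¬ s₀.IsDiag →
    ∃ E : EdgeCycle T, E.t 0 = t₀ ∧ E.s 0 = s₀
  angle_sum : ∀ E : EdgeCycle T, {i : ZMod (E.n + 1) | T.IsPi (E.t i) (E.s i)}.ncard = 2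

end TautGlue

/-- The sign of the sequence `(v, a, b, c)` as a permutation of `(0,1,2,3)`:
`1` if even, `-1` if odd, `0` if the entries are not distinct. -/
def seqSign (v a b c : Fin 4) : ℤ :=
  Int.sign (((a.1 : ℤ) - v.1) * ((b.1 : ℤ) - v.1) * ((c.1 : ℤ) - v.1) *
    ((b.1 : ℤ) - a.1) * ((c.1 : ℤ) - a.1) * ((c.1 : ℤ) - b.1))

/-- The tetrahedron `t`, with orientation `ε` and edge colouring `c` (`true` = red,
`false` = blue), is veering: at each vertex `v`, reading anticlockwise as seen from
outside, the edge following the π-angle edge is blue and the next one is red. -/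
def VeeringTet (T : TautGlue) (t : T.Tet) (ε : ℤ) (c : Sym2 (Fin 4) → Bool) : Prop :=
  ∀ v a b d : Fin 4, T.IsPi t s(v, a) → seqSign v a b d = ε →
    c s(v, b) = false ∧ c s(v, d) = true

/-- An orientation of the triangulation: a coherent choice of orientations of the model
tetrahedra, each face pairing being orientation-reversing on representatives. -/
def OrientCompat (T : TautGlue) (o : T.Tet → ℤ) : Prop :=
  (∀ t, o t = 1 ∨ o t = -1) ∧
    ∀ p : T.Tet × Fin 4, (Equiv.Perm.sign (T.glueVert p) : ℤ) * o p.1 = - o (T.glue p).1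

/-- The realisation `|T|` is orientable. -/
def Orientable (T : TautGlue) : Prop := ∃ o, OrientCompat T o

/-- A (global) veering structure on `T`: an orientation together with a colouring of
the edges of the realisation (i.e. a colouring of model edges invariant under the face
pairings) making every model tetrahedron veering. -/
def HasVeering (T : TautGlue) : Prop :=
  ∃ (o : T.Tet → ℤ) (c : T.Tet → Sym2 (Fin 4) → Bool),
    OrientCompat T o ∧
    (∀ (p : T.Tet × Fin 4) (s : Sym2 (Fin 4)), ¬ s.IsDiag → p.2 ∉ s →
      c (T.glue p).1 (Sym2.map (⇑(T.glueVert p)) s) = c p.1 s) ∧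
    ∀ t, VeeringTet T t (o t) (c t)

/-- `T` is locally veering: for every edge, the model edge neighbourhood `T_e` (the
cycle of tetrahedra around the edge, glued only along the faces meeting the edge)
admits an orientation and a veering colouring. -/
def LocallyVeering (T : TautGlue) : Prop :=
  ∀ E : TautGlue.EdgeCycle T,
    ∃ (ε : ZMod (E.n + 1) → ℤ) (c : ZMod (E.n + 1) → Sym2 (Fin 4) → Bool),
      (∀ i, ε i = 1 ∨ ε i = -1) ∧
      (∀ i, (Equiv.Perm.sign (T.glueVert (E.t i, E.f i)) : ℤ) * ε i = - ε (i + 1)) ∧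
      (∀ i (s : Sym2 (Fin 4)), ¬ s.IsDiag → E.f i ∉ s →
        c (i + 1) (Sym2.map (⇑(T.glueVert (E.t i, E.f i))) s) = c i s) ∧
      ∀ i, VeeringTet T (E.t i) (ε i) (c i)

section VeeringAux

private lemma seqSign_swap : ∀ v a b d : Fin 4, seqSign v a d b = - seqSign v a b d := by decide

private lemma seqSign_trichot : ∀ v a b d : Fin 4,
    seqSign v a b d = 0 ∨ seqSign v a b d = 1 ∨ seqSign v a b d = -1 := by decide

private lemma seqSign_distinct : ∀ v a b d : Fin 4, seqSign v a b d ≠ 0 →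
    v ≠ a ∧ v ≠ b ∧ v ≠ d ∧ a ≠ b ∧ a ≠ d ∧ b ≠ d := by decide

private lemma exists_fourth : ∀ v a b : Fin 4, v ≠ a → v ≠ b → a ≠ b →
    ∃ d, seqSign v a b d ≠ 0 := by decide

set_option maxRecDepth 40000 in
set_option maxHeartbeats 4000000 in
private lemma seqSign_core : ∀ v a b d v' a' b' d' : Fin 4,
    ((v = v' ∧ a = a') ∨ (v = a' ∧ a = v') ∨
      (∀ u : Fin 4, (u = v' ∨ u = a') ↔ ¬(u = v ∨ u = a))) →
    seqSign v a b d ≠ 0 → seqSign v' a' b' d' = seqSign v a b d →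
    ((v = v' ∧ d = b') ∨ (v = b' ∧ d = v')) → False := by decide

private lemma partner_aux : ∀ x y v : Fin 4, x ≠ y → ∃ a, a ≠ v ∧
    ((v = x ∧ a = y) ∨ (v = y ∧ a = x) ∨
      (∀ u : Fin 4, (u = v ∨ u = a) ↔ ¬(u = x ∨ u = y))) := by decide

private lemma dicho_aux : ∀ x y fi ar f : Fin 4,
    x ≠ y → fi ≠ x → fi ≠ y → ar ≠ x → ar ≠ y → ar ≠ fi → f ≠ x → f ≠ y →
    f = fi ∨ f = ar := by decide

private lemma memext_aux : ∀ v a v' a' : Fin 4,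
    (∀ u : Fin 4, (u = v' ∨ u = a') ↔ (u = v ∨ u = a)) →
    ((v = v' ∧ a = a') ∨ (v = a' ∧ a = v')) := by decide

private lemma pm_one {x : ℤ} (hx : x = 1 ∨ x = -1) : x * x = 1 := by
  rcases hx with rfl | rfl <;> norm_num

private lemma pm_eq {x y : ℤ} (hx : x = 1 ∨ x = -1) (hy : y = 1 ∨ y = -1)
    (h : x * y = 1) : x = y := by
  rcases hx with rfl | rfl <;> rcases hy with rfl | rfl <;>
    first | rfl | (exact absurd h (by decide))

private lemma pm_neg {x y : ℤ} (hx : x = 1 ∨ x = -1) (hy : y = 1 ∨ y = -1)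
    (h : x * y = -1) : x = -y := by
  rcases hx with rfl | rfl <;> rcases hy with rfl | rfl <;>
    first | decide | (exact absurd h (by decide))

private lemma sym2_cases (z : Sym2 (Fin 4)) : ∃ x y : Fin 4, z = s(x, y) := by
  induction z using Sym2.ind with | _ x y => exact ⟨x, y, rfl⟩

variable {T : TautGlue}

lemma isPi_rel {t : T.Tet} {v a v' a' : Fin 4}
    (h1 : T.IsPi t s(v, a)) (h2 : T.IsPi t s(v', a')) :
    (v = v' ∧ a = a') ∨ (v = a' ∧ a = v') ∨
      (∀ u : Fin 4, (u = v' ∨ u = a') ↔ ¬(u = v ∨ u = a)) := by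
  rcases h1 with h1 | h1 <;> rcases h2 with h2 | h2
  · have h3 : s(v', a') = s(v, a) := h2.trans h1.symm
    rcases Sym2.eq_iff.1 h3 with ⟨h4, h5⟩ | ⟨h4, h5⟩
    · exact Or.inl ⟨h4.symm, h5.symm⟩
    · exact Or.inr (Or.inl ⟨h5.symm, h4.symm⟩)
  · refine Or.inr (Or.inr fun u => ?_)
    have hu := h2 u; rw [← h1] at hu
    simpa [Sym2.mem_iff] using hu
  · refine Or.inr (Or.inr fun u => ?_)
    have hu := h1 u; rw [← h2] at hu
    simp only [Sym2.mem_iff] at hu ⊢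
    tauto
  · have hext : ∀ u : Fin 4, (u = v' ∨ u = a') ↔ (u = v ∨ u = a) := by
      intro u
      have hu := (h2 u).trans (h1 u).symm
      simpa [Sym2.mem_iff] using hu
    rcases memext_aux v a v' a' hext with h | h
    exacts [Or.inl h, Or.inr (Or.inl h)]

lemma exists_partner (t : T.Tet) (v : Fin 4) : ∃ a, a ≠ v ∧ T.IsPi t s(v, a) := by
  obtain ⟨x, y, hxy⟩ := sym2_cases (T.diag t)
  have hne : x ≠ y := by
    have h := T.diag_nd t; rw [hxy, Sym2.mk_isDiag_iff] at h; exact h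
  obtain ⟨a, hav, h⟩ := partner_aux x y v hne
  refine ⟨a, hav, ?_⟩
  rcases h with ⟨rfl, rfl⟩ | ⟨rfl, rfl⟩ | h
  · exact Or.inl hxy.symm
  · exact Or.inl ((Sym2.eq_swap).trans hxy.symm)
  · refine Or.inr fun u => ?_
    rw [hxy]
    simpa [Sym2.mem_iff] using h u

lemma not_isPi_of {t : T.Tet} {v a b : Fin 4} (hPi : T.IsPi t s(v, a)) (hva : v ≠ a)
    (hab : a ≠ b) (hp : T.IsPi t s(v, b)) : False := by
  rcases isPi_rel hPi hp with ⟨-, h⟩ | ⟨-, h⟩ | h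
  · exact hab h
  · exact hva h.symm
  · exact (h v).1 (Or.inl rfl) (Or.inl rfl)

/-- The forced colour of the model edge `e` of `t` in orientation `ε`. -/
noncomputable def Fcol (T : TautGlue) (t : T.Tet) (ε : ℤ) (e : Sym2 (Fin 4)) : Bool :=
  @decide (∃ v a b d : Fin 4, e = s(v, d) ∧ T.IsPi t s(v, a) ∧ seqSign v a b d = ε)
    (Classical.propDecidable _)

lemma Fcol_eq_true {t : T.Tet} {ε : ℤ} {e : Sym2 (Fin 4)} :
    Fcol T t ε e = true ↔
      ∃ v a b d : Fin 4, e = s(v, d) ∧ T.IsPi t s(v, a) ∧ seqSign v a b d = ε :=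
  @decide_eq_true_iff _ (Classical.propDecidable _)

lemma Fcol_eq_false {t : T.Tet} {ε : ℤ} {e : Sym2 (Fin 4)} :
    Fcol T t ε e = false ↔
      ¬ ∃ v a b d : Fin 4, e = s(v, d) ∧ T.IsPi t s(v, a) ∧ seqSign v a b d = ε :=
  @decide_eq_false_iff_not _ (Classical.propDecidable _)

lemma Fcol_false_of {t : T.Tet} {ε : ℤ} {v a b d : Fin 4} (hPi : T.IsPi t s(v, a))
    (hsgn : seqSign v a b d = ε) (hne : seqSign v a b d ≠ 0) :
    Fcol T t ε s(v, b) = false := by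
  rw [Fcol_eq_false]
  rintro ⟨v', a', b', d', he, hPi', hs'⟩
  refine seqSign_core v' a' b' d' v a b d (isPi_rel hPi' hPi) ?_ ?_ ?_
  · rw [hs', ← hsgn]; exact hne
  · rw [hs', hsgn]
  · rcases Sym2.eq_iff.1 he with ⟨h1, h2⟩ | ⟨h1, h2⟩
    · exact Or.inl ⟨h1.symm, h2.symm⟩
    · exact Or.inr ⟨h2.symm, h1.symm⟩

lemma Fcol_veering (t : T.Tet) {ε : ℤ} (hε : ε = 1 ∨ ε = -1) :
    VeeringTet T t ε (Fcol T t ε) := by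
  intro v a b d hPi hsgn
  have hne : seqSign v a b d ≠ 0 := by rcases hε with rfl | rfl <;> rw [hsgn] <;> norm_num
  exact ⟨Fcol_false_of hPi hsgn hne, Fcol_eq_true.2 ⟨v, a, b, d, rfl, hPi, hsgn⟩⟩

lemma veering_unique {t : T.Tet} {ε : ℤ} {c : Sym2 (Fin 4) → Bool} (hc : VeeringTet T t ε c)
    (hε : ε = 1 ∨ ε = -1) {e : Sym2 (Fin 4)} (hnd : ¬ e.IsDiag) (hnp : ¬ T.IsPi t e) :
    c e = Fcol T t ε e := by
  obtain ⟨v, b, rfl⟩ := sym2_cases e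
  have hvb : v ≠ b := fun h => hnd (Sym2.mk_isDiag_iff.2 h)
  obtain ⟨a, hav, hPi⟩ := exists_partner t v
  have hab : a ≠ b := fun h => hnp (h ▸ hPi)
  obtain ⟨d, hd⟩ := exists_fourth v a b (Ne.symm hav) hvb hab
  have hcases : seqSign v a b d = ε ∨ seqSign v a b d = -ε := by
    rcases seqSign_trichot v a b d with h | h | h
    · exact absurd h hd
    · rcases hε with rfl | rfl
      · exact Or.inl h
      · exact Or.inr (by rw [h]; try norm_num)
    · rcases hε with rfl | rfl
      · exact Or.inr (by rw [h]; try norm_num)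
      · exact Or.inl h
  rcases hcases with hsgn | hsgn
  · rw [(hc v a b d hPi hsgn).1, Fcol_false_of hPi hsgn hd]
  · have hsgn' : seqSign v a d b = ε := by rw [seqSign_swap, hsgn, neg_neg]
    rw [(hc v a d b hPi hsgn').2, eq_comm, Fcol_eq_true]
    exact ⟨v, a, d, b, rfl, hPi, hsgn'⟩

lemma veering_neg {t : T.Tet} {ε : ℤ} {c : Sym2 (Fin 4) → Bool} (hc : VeeringTet T t ε c) :
    VeeringTet T t (-ε) fun e => ! c e := by
  intro v a b d hPi hsgn
  have h2 : seqSign v a d b = ε := by rw [seqSign_swap, hsgn, neg_neg]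
  have h3 := hc v a d b hPi h2
  simp [h3.1, h3.2]

private lemma cycle_iter {n : ℕ} {α : Type*} (g : ZMod (n + 1) → α)
    (h : ∀ i, g (i + 1) = g i) (i j : ZMod (n + 1)) : g i = g j := by
  have key : ∀ (k : ℕ) (i : ZMod (n + 1)), g (i + (k : ZMod (n + 1))) = g i := by
    intro k
    induction k with
    | zero => intro i; simp
    | succ m ih =>
        intro i
        have hc : (((m + 1 : ℕ)) : ZMod (n + 1)) = (m : ZMod (n + 1)) + 1 := by push_cast; ring
        rw [hc, ← add_assoc, h (i + (m : ZMod (n + 1))), ih]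
  have hij : i + (((j - i).val : ℕ) : ZMod (n + 1)) = j := by
    rw [ZMod.natCast_rightInverse (j - i)]; ring
  rw [← hij, key]

lemma exists_veering_oriented (hLV : LocallyVeering T) {o : T.Tet → ℤ}
    (ho : OrientCompat T o) (E : TautGlue.EdgeCycle T) :
    ∃ c : ZMod (E.n + 1) → Sym2 (Fin 4) → Bool,
      (∀ i, VeeringTet T (E.t i) (o (E.t i)) (c i)) ∧
      ∀ i, c (i + 1) (E.s (i + 1)) = c i (E.s i) := by
  obtain ⟨ε, c, hε1, hεr, hcinv, hcv⟩ := hLV E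
  have hconst : ∀ i, ε i * o (E.t i) = ε 0 * o (E.t 0) := by
    intro i
    refine cycle_iter (fun k => ε k * o (E.t k)) (fun k => ?_) i 0
    have h1 := hεr k
    have h2 := ho.2 (E.t k, E.f k)
    rw [E.glue_t k] at h2
    have hsq : ((Equiv.Perm.sign (T.glueVert (E.t k, E.f k)) : ℤ)) *
        ((Equiv.Perm.sign (T.glueVert (E.t k, E.f k)) : ℤ)) = 1 := by
      rw [← Units.val_mul, Int.units_mul_self, Units.val_one]
    calc ε (k + 1) * o (E.t (k + 1))
        = (((Equiv.Perm.sign (T.glueVert (E.t k, E.f k)) : ℤ)) * ε k) *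
          (((Equiv.Perm.sign (T.glueVert (E.t k, E.f k)) : ℤ)) * o (E.t k)) := by
          rw [h1, h2]; ring
      _ = (((Equiv.Perm.sign (T.glueVert (E.t k, E.f k)) : ℤ)) *
          ((Equiv.Perm.sign (T.glueVert (E.t k, E.f k)) : ℤ))) * (ε k * o (E.t k)) := by ring
      _ = ε k * o (E.t k) := by rw [hsq, one_mul]
  by_cases h0 : ε 0 = o (E.t 0)
  · refine ⟨c, fun i => ?_, fun i => ?_⟩
    · have hsq0 : ε 0 * o (E.t 0) = 1 := by rw [h0]; exact pm_one (ho.1 _)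
      have hi : ε i = o (E.t i) := pm_eq (hε1 i) (ho.1 _) (by rw [hconst i, hsq0])
      exact hi ▸ hcv i
    · rw [← E.maps_s i]
      exact hcinv i (E.s i) (E.s_nd i) (E.f_not_mem i)
  · refine ⟨fun i e => ! c i e, fun i => ?_, fun i => ?_⟩
    · have hne0 : ε 0 = - o (E.t 0) := by
        rcases hε1 0 with h1 | h1 <;> rcases ho.1 (E.t 0) with h2 | h2 <;>
          rw [h1, h2] at h0 ⊢ <;>
          first | decide | (exact absurd rfl h0)
      have hsq0 : ε 0 * o (E.t 0) = -1 := by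
        rcases ho.1 (E.t 0) with h2 | h2 <;> rw [hne0, h2] <;> decide
      have hi : ε i = - o (E.t i) := pm_neg (hε1 i) (ho.1 _) (by rw [hconst i, hsq0])
      have hv := veering_neg (hcv i)
      rw [hi, neg_neg] at hv
      exact hv
    · have hc := hcinv i (E.s i) (E.s_nd i) (E.f_not_mem i)
      show (! c (i + 1) (E.s (i + 1))) = ! c i (E.s i)
      rw [← E.maps_s i, hc]

lemma forced_const (hLV : LocallyVeering T) {o : T.Tet → ℤ} (ho : OrientCompat T o)
    (E : TautGlue.EdgeCycle T) (i j : ZMod (E.n + 1))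
    (hi : ¬ T.IsPi (E.t i) (E.s i)) (hj : ¬ T.IsPi (E.t j) (E.s j)) :
    Fcol T (E.t i) (o (E.t i)) (E.s i) = Fcol T (E.t j) (o (E.t j)) (E.s j) := by
  obtain ⟨c, hv, hstep⟩ := exists_veering_oriented hLV ho E
  have hconst : c i (E.s i) = c j (E.s j) := cycle_iter (fun k => c k (E.s k)) hstep i j
  rw [← veering_unique (hv i) (ho.1 _) (E.s_nd i) hi,
    ← veering_unique (hv j) (ho.1 _) (E.s_nd j) hj, hconst]

/-- One step around an edge: regluing along a face containing the edge. -/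
def Step (T : TautGlue) (m m' : T.Tet × Sym2 (Fin 4)) : Prop :=
  ∃ f : Fin 4, f ∉ m.2 ∧ m' = ((T.glue (m.1, f)).1, Sym2.map (⇑(T.glueVert (m.1, f))) m.2)

lemma step_symm {m m' : T.Tet × Sym2 (Fin 4)} (h : Step T m m') : Step T m' m := by
  obtain ⟨f, hf, rfl⟩ := h
  refine ⟨(T.glue (m.1, f)).2, ?_, ?_⟩
  · rw [← T.glueVert_face (m.1, f)]
    simp only [Sym2.mem_map, not_exists]
    rintro u ⟨hu, hequ⟩
    exact hf ((Equiv.injective _ hequ) ▸ hu)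
  · show m = ((T.glue (T.glue (m.1, f))).1,
      Sym2.map (⇑(T.glueVert (T.glue (m.1, f)))) (Sym2.map (⇑(T.glueVert (m.1, f))) m.2))
    rw [T.glue_invol (m.1, f), T.glueVert_symm (m.1, f), Sym2.map_map]
    have hid : (⇑(T.glueVert (m.1, f))⁻¹ ∘ ⇑(T.glueVert (m.1, f))) = id := by
      funext u; simp
    rw [hid, Sym2.map_id, id_eq]

lemma step_mem (E : TautGlue.EdgeCycle T) (i : ZMod (E.n + 1)) {m' : T.Tet × Sym2 (Fin 4)}
    (h : Step T (E.t i, E.s i) m') : ∃ j, m' = (E.t j, E.s j) := by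
  obtain ⟨f, hf, rfl⟩ := h
  simp only at hf ⊢
  obtain ⟨x, y, hxy⟩ := sym2_cases (E.s i)
  have hxny : x ≠ y := by
    have hnd := E.s_nd i; rw [hxy, Sym2.mk_isDiag_iff] at hnd; exact hnd
  have hi1 : i - 1 + 1 = i := by ring
  have hglue1 : (T.glue (E.t (i - 1), E.f (i - 1))).1 = E.t i := by rw [E.glue_t (i - 1), hi1]
  have hmaps1 : Sym2.map (⇑(T.glueVert (E.t (i - 1), E.f (i - 1)))) (E.s (i - 1)) = E.s i := by
    rw [E.maps_s (i - 1), hi1]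
  have hafs : (T.glue (E.t (i - 1), E.f (i - 1))).2 ∉ E.s i := by
    rw [← hmaps1, ← T.glueVert_face (E.t (i - 1), E.f (i - 1))]
    simp only [Sym2.mem_map, not_exists]
    rintro u ⟨hu, hequ⟩
    exact E.f_not_mem (i - 1) ((Equiv.injective _ hequ) ▸ hu)
  have hafne : (T.glue (E.t (i - 1), E.f (i - 1))).2 ≠ E.f i := by
    have hp := E.proper (i - 1); rwa [hi1] at hp
  have hmem : ∀ z : Fin 4, z ∉ E.s i → z ≠ x ∧ z ≠ y := by
    intro z hz
    rw [hxy, Sym2.mem_iff] at hz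
    push_neg at hz
    exact hz
  obtain ⟨hf1, hf2⟩ := hmem f hf
  obtain ⟨hfi1, hfi2⟩ := hmem (E.f i) (E.f_not_mem i)
  obtain ⟨ha1, ha2⟩ := hmem _ hafs
  rcases dicho_aux x y (E.f i) ((T.glue (E.t (i - 1), E.f (i - 1))).2) f
      hxny hfi1 hfi2 ha1 ha2 hafne hf1 hf2 with rfl | rfl
  · exact ⟨i + 1, by rw [E.glue_t i, E.maps_s i]⟩
  · refine ⟨i - 1, ?_⟩
    have hpair : (E.t i, (T.glue (E.t (i - 1), E.f (i - 1))).2) =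
        T.glue (E.t (i - 1), E.f (i - 1)) := by rw [← hglue1]
    rw [hpair, T.glue_invol, T.glueVert_symm, ← hmaps1, Sym2.map_map]
    have hid : (⇑(T.glueVert (E.t (i - 1), E.f (i - 1)))⁻¹ ∘
        ⇑(T.glueVert (E.t (i - 1), E.f (i - 1)))) = id := by funext u; simp
    rw [hid, Sym2.map_id, id_eq]

lemma eqvGen_mem (E : TautGlue.EdgeCycle T) {m m' : T.Tet × Sym2 (Fin 4)}
    (h : Relation.EqvGen (Step T) m m') :
    (∃ i, m = (E.t i, E.s i)) ↔ (∃ j, m' = (E.t j, E.s j)) := by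
  induction h with
  | rel x y hxy =>
      constructor
      · rintro ⟨i, rfl⟩; exact step_mem E i hxy
      · rintro ⟨j, rfl⟩; exact step_mem E j (step_symm hxy)
  | refl x => exact Iff.rfl
  | symm x y _ ih => exact ih.symm
  | trans x y z _ _ ih1 ih2 => exact ih1.trans ih2

end VeeringAux
/-- A locally veering taut ideal triangulation admits a veering structure if and only
if its realisation is orientable. -/
theorem locally_veering_iff_orientable (T : TautGlue) (hT : TautGlue.IsTaut T)
    (hLV : LocallyVeering T) : HasVeering T ↔ Orientable T := by
  constructor
  · rintro ⟨o, c, hoc, -, -⟩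
    exact ⟨o, hoc⟩
  · rintro ⟨o, hoc⟩
    classical
    set C : T.Tet × Sym2 (Fin 4) → Bool := fun m =>
      if h : ∃ q, Relation.EqvGen (Step T) m q ∧ ¬ T.IsPi q.1 q.2 then
        Fcol T h.choose.1 (o h.choose.1) h.choose.2
      else true with hCdef
    have key : ∀ (m q q' : T.Tet × Sym2 (Fin 4)), ¬ m.2.IsDiag →
        Relation.EqvGen (Step T) m q → Relation.EqvGen (Step T) m q' →
        ¬ T.IsPi q.1 q.2 → ¬ T.IsPi q'.1 q'.2 →
        Fcol T q.1 (o q.1) q.2 = Fcol T q'.1 (o q'.1) q'.2 := by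
      intro m q q' hnd h1 h2 hq hq'
      obtain ⟨E, hE1, hE2⟩ := hT.around m.1 m.2 hnd
      have hm : ∃ i, m = (E.t i, E.s i) := ⟨0, by rw [hE1, hE2]⟩
      obtain ⟨i, hi⟩ := (eqvGen_mem E h1).1 hm
      obtain ⟨j, hj⟩ := (eqvGen_mem E h2).1 hm
      subst hi; subst hj
      exact forced_const hLV hoc E i j hq hq'
    have hCeq : ∀ (t : T.Tet) (e : Sym2 (Fin 4)), ¬ e.IsDiag → ¬ T.IsPi t e →
        C (t, e) = Fcol T t (o t) e := by
      intro t e hnd hnp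
      have hex : ∃ q, Relation.EqvGen (Step T) (t, e) q ∧ ¬ T.IsPi q.1 q.2 :=
        ⟨(t, e), Relation.EqvGen.refl _, hnp⟩
      simp only [hCdef]
      rw [dif_pos hex]
      exact key (t, e) hex.choose (t, e) hnd hex.choose_spec.1 (Relation.EqvGen.refl _)
        hex.choose_spec.2 hnp
    refine ⟨o, fun t e => C (t, e), hoc, ?_, ?_⟩
    · intro p s hnd hmem
      have hstep : Step T (p.1, s) ((T.glue p).1, Sym2.map (⇑(T.glueVert p)) s) :=
        ⟨p.2, hmem, rfl⟩
      have hiff : (∃ q, Relation.EqvGen (Step T)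
            ((T.glue p).1, Sym2.map (⇑(T.glueVert p)) s) q ∧ ¬ T.IsPi q.1 q.2) ↔
          (∃ q, Relation.EqvGen (Step T) (p.1, s) q ∧ ¬ T.IsPi q.1 q.2) := by
        constructor
        · rintro ⟨q, hq1, hq2⟩
          exact ⟨q, Relation.EqvGen.trans _ _ _ (Relation.EqvGen.rel _ _ hstep) hq1, hq2⟩
        · rintro ⟨q, hq1, hq2⟩
          exact ⟨q, Relation.EqvGen.trans _ _ _
            (Relation.EqvGen.symm _ _ (Relation.EqvGen.rel _ _ hstep)) hq1, hq2⟩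
      show C _ = C _
      by_cases h : ∃ q, Relation.EqvGen (Step T) (p.1, s) q ∧ ¬ T.IsPi q.1 q.2
      · have h' := hiff.2 h
        simp only [hCdef]
        rw [dif_pos h', dif_pos h]
        exact key (p.1, s) h'.choose h.choose hnd
          (Relation.EqvGen.trans _ _ _ (Relation.EqvGen.rel _ _ hstep) h'.choose_spec.1)
          h.choose_spec.1 h'.choose_spec.2 h.choose_spec.2
      · have h' : ¬ _ := fun hh => h (hiff.1 hh)
        simp only [hCdef]
        rw [dif_neg h', dif_neg h]
    · intro t v a b d hPi hsgn
      have ho1 := hoc.1 t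
      have hne : seqSign v a b d ≠ 0 := by
        rcases ho1 with h | h <;> rw [h] at hsgn <;> rw [hsgn] <;> norm_num
      obtain ⟨hva, hvb, hvd, hab, had, hbd⟩ := seqSign_distinct v a b d hne
      have hndb : ¬ (s(v, b)).IsDiag := fun hh => hvb (Sym2.mk_isDiag_iff.1 hh)
      have hndd : ¬ (s(v, d)).IsDiag := fun hh => hvd (Sym2.mk_isDiag_iff.1 hh)
      have hnpb : ¬ T.IsPi t s(v, b) := fun hp => not_isPi_of hPi hva hab hp
      have hnpd : ¬ T.IsPi t s(v, d) := fun hp => not_isPi_of hPi hva had hp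
      have hF := Fcol_veering t ho1 v a b d hPi hsgn
      constructor
      · show C (t, s(v, b)) = false
        rw [hCeq t s(v, b) hndb hnpb]; exact hF.1
      · show C (t, s(v, d)) = true
        rw [hCeq t s(v, d) hndd hnpd]; exact hF.2
end
end

section
/- Guéritaud's construction is a functor from the category of loom spaces (objects: loom spaces; morphisms: loom isomorphisms) to the category of locally veering taut ideal triangulations (morphisms: taut isomorphisms): it sends identities to identities, compositions to compositions, and each loom isomorphism to a taut isomorphism of the induced triangulations. -/
open Set Topology Filter

noncomputable section

/-- The open unit square `(0,1) × (0,1)`. -/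
def unitSq : Set (ℝ × ℝ) := Set.Ioo (0:ℝ) 1 ×ˢ Set.Ioo (0:ℝ) 1

/-- The closed unit square `[0,1] × [0,1]`. -/
def closedSq : Set (ℝ × ℝ) := Set.Icc (0:ℝ) 1 ×ˢ Set.Icc (0:ℝ) 1

/-- The four corners of the unit square. -/
def sqCorners : Set (ℝ × ℝ) := {((0:ℝ),(0:ℝ)), ((1:ℝ),(0:ℝ)), ((1:ℝ),(1:ℝ)), ((0:ℝ),(1:ℝ))}

/-- The four closed sides of the unit square. -/
def sqSides : Set (Set (ℝ × ℝ)) :=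
  { Set.Icc (0:ℝ) 1 ×ˢ ({0} : Set ℝ), Set.Icc (0:ℝ) 1 ×ˢ ({1} : Set ℝ),
    ({0} : Set ℝ) ×ˢ Set.Icc (0:ℝ) 1, ({1} : Set ℝ) ×ˢ Set.Icc (0:ℝ) 1 }

/-- `f` and `g` are mutually inverse homeomorphisms between `D` and `R`. -/
structure HomeoOn (f g : ℝ × ℝ → ℝ × ℝ) (D R : Set (ℝ × ℝ)) : Prop where
  contOn : ContinuousOn f D
  mapsTo : Set.MapsTo f D R
  contOn_inv : ContinuousOn g R
  mapsTo_inv : Set.MapsTo g R D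
  left_inv : ∀ x ∈ D, g (f x) = x
  right_inv : ∀ y ∈ R, f (g y) = y

/-- Data of a pair of (transverse, nonsingular) foliations of the plane, recorded by the
upper leaf and lower leaf through each point. -/
structure LoomPre where
  upLeaf : ℝ × ℝ → Set (ℝ × ℝ)
  loLeaf : ℝ × ℝ → Set (ℝ × ℝ)
  mem_upLeaf : ∀ p, p ∈ upLeaf p
  mem_loLeaf : ∀ p, p ∈ loLeaf p
  upLeaf_eq : ∀ p q, q ∈ upLeaf p → upLeaf q = upLeaf p
  loLeaf_eq : ∀ p q, q ∈ loLeaf p → loLeaf q = loLeaf p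
  upLeaf_conn : ∀ p, IsConnected (upLeaf p)
  loLeaf_conn : ∀ p, IsConnected (loLeaf p)

namespace LoomPre

variable (L : LoomPre)

/-- A parametrisation of a rectangle: a homeomorphism from the open unit square taking
horizontal lines into leaves of the lower foliation and vertical lines into leaves of the
upper foliation. -/
structure IsRectParam (f g : ℝ × ℝ → ℝ × ℝ) (R : Set (ℝ × ℝ)) : Prop where
  homeo : HomeoOn f g unitSq R
  image : f '' unitSq = R
  horiz : ∀ x ∈ unitSq, ∀ y ∈ unitSq, x.2 = y.2 → f x ∈ L.loLeaf (f y)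
  vert : ∀ x ∈ unitSq, ∀ y ∈ unitSq, x.1 = y.1 → f x ∈ L.upLeaf (f y)

/-- A rectangle of the loom space. -/
def IsRect (R : Set (ℝ × ℝ)) : Prop :=
  IsOpen R ∧ ∃ f g, L.IsRectParam f g R

/-- `F, G` parametrise `R` and extend to a homeomorphism from the closed square minus
the set `M` of missing boundary points onto the closure of `R`. -/
def RectExt (M R : Set (ℝ × ℝ)) (F G : ℝ × ℝ → ℝ × ℝ) : Prop :=
  L.IsRectParam F G R ∧ HomeoOn F G (closedSq \ M) (closure R)

/-- A cusp rectangle with ideal corner corresponding to the square corner `v`. -/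
def IsCuspRectAt (R : Set (ℝ × ℝ)) (v : ℝ × ℝ) : Prop :=
  v ∈ sqCorners ∧ L.IsRect R ∧ ∃ F G, L.RectExt {v} R F G

/-- A cusp rectangle. -/
def IsCuspRect (R : Set (ℝ × ℝ)) : Prop := ∃ v, L.IsCuspRectAt R v

/-- The cusp sides of a cusp rectangle: images of the half-open sides of the square
adjacent to the missing corner. -/
def CuspSides (R : Set (ℝ × ℝ)) : Set (Set (ℝ × ℝ)) :=
  {δ | ∃ v F G, L.IsCuspRectAt R v ∧ L.RectExt {v} R F G ∧
      ∃ e ∈ sqSides, v ∈ e ∧ δ = F '' (e \ {v})}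

/-- An edge rectangle: the extension misses two opposite corners of the square. -/
def IsEdgeRect (R : Set (ℝ × ℝ)) : Prop :=
  L.IsRect R ∧
    ((∃ F G, L.RectExt {((0:ℝ),(0:ℝ)), ((1:ℝ),(1:ℝ))} R F G) ∨
     (∃ F G, L.RectExt {((1:ℝ),(0:ℝ)), ((0:ℝ),(1:ℝ))} R F G))

/-- A face rectangle: the extension misses one corner and one interior point of each
of the two sides not adjacent to that corner. -/
def IsFaceRect (R : Set (ℝ × ℝ)) : Prop :=
  L.IsRect R ∧ ∃ a ∈ Set.Ioo (0:ℝ) 1, ∃ b ∈ Set.Ioo (0:ℝ) 1, ∃ F G,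
    (L.RectExt {((0:ℝ),(0:ℝ)), (1,a), (b,1)} R F G ∨
     L.RectExt {((1:ℝ),(0:ℝ)), (0,a), (b,1)} R F G ∨
     L.RectExt {((1:ℝ),(1:ℝ)), (0,a), (b,0)} R F G ∨
     L.RectExt {((0:ℝ),(1:ℝ)), (1,a), (b,0)} R F G)

/-- A tetrahedron rectangle with missing boundary points `(a,0), (1,b), (c,1), (0,d)`. -/
def IsTetRectWith (R : Set (ℝ × ℝ)) (a b c d : ℝ) : Prop :=
  L.IsRect R ∧ a ∈ Set.Ioo (0:ℝ) 1 ∧ b ∈ Set.Ioo (0:ℝ) 1 ∧ c ∈ Set.Ioo (0:ℝ) 1 ∧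
    d ∈ Set.Ioo (0:ℝ) 1 ∧ ∃ F G, L.RectExt {(a,(0:ℝ)), ((1:ℝ),b), (c,(1:ℝ)), ((0:ℝ),d)} R F G

/-- A tetrahedron rectangle. -/
def IsTetRect (R : Set (ℝ × ℝ)) : Prop := ∃ a b c d, L.IsTetRectWith R a b c d

/-- One step of the equivalence between cusp rectangles: a cusp side of one is
contained in a cusp side of the other. -/
def CuspRel (R Q : Set (ℝ × ℝ)) : Prop :=
  L.IsCuspRect R ∧ L.IsCuspRect Q ∧
    ∃ δ ∈ L.CuspSides R, ∃ ε ∈ L.CuspSides Q, δ ⊆ ε ∨ ε ⊆ δ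

/-- Equivalence of cusp rectangles: a finite chain of elementary steps. -/
def CuspEquiv (R Q : Set (ℝ × ℝ)) : Prop := Relation.ReflTransGen L.CuspRel R Q

/-- The equivalence class of a cusp rectangle. -/
def cuspClass (R : Set (ℝ × ℝ)) : Set (Set (ℝ × ℝ)) := {Q | L.CuspEquiv R Q}

/-- A cusp: an equivalence class of cusp rectangles. -/
def IsCusp (C : Set (Set (ℝ × ℝ))) : Prop := ∃ R, L.IsCuspRect R ∧ C = L.cuspClass R

def IsUpLeaf (ℓ : Set (ℝ × ℝ)) : Prop := ∃ p, ℓ = L.upLeaf p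

def IsLoLeaf (ℓ : Set (ℝ × ℝ)) : Prop := ∃ p, ℓ = L.loLeaf p

def IsLeaf (ℓ : Set (ℝ × ℝ)) : Prop := L.IsUpLeaf ℓ ∨ L.IsLoLeaf ℓ

/-- `ℓ` is a cusp leaf for the cusp `C`. -/
def IsCuspLeafFor (ℓ : Set (ℝ × ℝ)) (C : Set (Set (ℝ × ℝ))) : Prop :=
  ∃ Q ∈ C, ∃ δ ∈ L.CuspSides Q, δ ⊆ ℓ

/-- `ℓ` contains a cusp side of some cusp rectangle. -/
def IsCuspLeaf (ℓ : Set (ℝ × ℝ)) : Prop :=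
  ∃ R, L.IsCuspRect R ∧ ∃ δ ∈ L.CuspSides R, δ ⊆ ℓ

end LoomPre

/-- The loom space axioms. -/
structure IsLoom (L : LoomPre) : Prop where
  basis : ∀ p : ℝ × ℝ, ∃ R, L.IsRect R ∧ p ∈ R
  cusp_ax : ∀ R v F G, L.IsCuspRectAt R v → L.RectExt {v} R F G →
      ∀ e ∈ sqSides, v ∈ e → ∃ Q, L.IsRect Q ∧ F '' (e \ {v}) ⊆ Q
  tet_ax : ∀ R, L.IsRect R → ∃ T, L.IsTetRect T ∧ R ⊆ T
  keane : ∀ R a b c d, L.IsTetRectWith R a b c d → a ≠ c ∧ b ≠ d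

/-- A loom isomorphism: a homeomorphism of the plane sending leaves to leaves. -/
def IsLoomIso (L M : LoomPre) (f : ℝ × ℝ → ℝ × ℝ) : Prop :=
  IsHomeomorph f ∧
    ∀ p : ℝ × ℝ,
      (f '' L.upLeaf p = M.upLeaf (f p) ∨ f '' L.upLeaf p = M.loLeaf (f p)) ∧
      (f '' L.loLeaf p = M.upLeaf (f p) ∨ f '' L.loLeaf p = M.loLeaf (f p))

/-- `P` west-east spans `Q`: a leaf of the foliation induced on `Q` by the lower
foliation is contained in `P`. -/
def WESpans (L : LoomPre) (P Q : Set (ℝ × ℝ)) : Prop := ∃ p ∈ Q, L.loLeaf p ∩ Q ⊆ P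

/-- `P` south-north spans `Q`. -/
def SNSpans (L : LoomPre) (P Q : Set (ℝ × ℝ)) : Prop := ∃ p ∈ Q, L.upLeaf p ∩ Q ⊆ P

/-- `P` spans `Q` (this determines the dihedral angle π in the induced taut
structure). -/
def Spans (L : LoomPre) (P Q : Set (ℝ × ℝ)) : Prop := WESpans L P Q ∨ SNSpans L P Q

namespace GF
open Real

/-! ### A homeomorphism from `(0,1)` to `ℝ` -/

noncomputable def g0 (x : ℝ) : ℝ := Real.tan (π * x - π / 2)
noncomputable def h0 (y : ℝ) : ℝ := Real.arctan y / π + 1 / 2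

lemma h0_mem (y : ℝ) : h0 y ∈ Set.Ioo (0:ℝ) 1 := by
  have h := Real.arctan_mem_Ioo y
  have hπ : (0:ℝ) < π := Real.pi_pos
  constructor
  · have h1 : -(1/2 : ℝ) < Real.arctan y / π := by
      rw [lt_div_iff₀ hπ]
      nlinarith [h.1]
    unfold h0; linarith
  · have h2 : Real.arctan y / π < 1/2 := by
      rw [div_lt_iff₀ hπ]
      nlinarith [h.2]
    unfold h0; linarith

lemma g0_h0 (y : ℝ) : g0 (h0 y) = y := by
  have hπ : (π:ℝ) ≠ 0 := ne_of_gt Real.pi_pos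
  have : π * h0 y - π / 2 = Real.arctan y := by
    unfold h0; field_simp; ring
  rw [g0, this, Real.tan_arctan]

lemma h0_g0 {x : ℝ} (hx : x ∈ Set.Ioo (0:ℝ) 1) : h0 (g0 x) = x := by
  have hπ : (0:ℝ) < π := Real.pi_pos
  have h1 : -(π/2) < π * x - π/2 := by nlinarith [hx.1]
  have h2 : π * x - π/2 < π/2 := by nlinarith [hx.2]
  rw [h0, g0, Real.arctan_tan h1 h2]
  field_simp
  ring

lemma contOn_g0 : ContinuousOn g0 (Set.Ioo (0:ℝ) 1) := by
  have hπ : (0:ℝ) < π := Real.pi_pos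
  intro x hx
  apply ContinuousAt.continuousWithinAt
  have hcos : Real.cos (π * x - π/2) ≠ 0 := by
    have : π * x - π/2 = -(π/2 - π * x) := by ring
    rw [this, Real.cos_neg, Real.cos_pi_div_two_sub]
    have : 0 < Real.sin (π * x) :=
      Real.sin_pos_of_pos_of_lt_pi (by nlinarith [hx.1]) (by nlinarith [hx.2])
    exact ne_of_gt this
  have hin : ContinuousAt (fun x : ℝ => π * x - π / 2) x := by fun_prop
  show ContinuousAt (fun x : ℝ => Real.tan (π * x - π / 2)) x
  simpa [g0, Function.comp_def] using
    ContinuousAt.comp (g := Real.tan) (f := fun x : ℝ => π * x - π / 2) (x := x)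
      (Real.continuousAt_tan.2 hcos) hin

lemma cont_h0 : Continuous h0 :=
  (Real.continuous_arctan.div_const π).add continuous_const

/-! ### The complement of a closed ball in the plane is preconnected -/

set_option maxHeartbeats 1000000 in
lemma preconn_compl_ball (R : ℝ) (hR : 0 < R) :
    IsPreconnected ((Metric.closedBall ((0,0) : ℝ × ℝ) R)ᶜ) := by
  have hA : IsPreconnected ((Set.Ioi R ×ˢ (Set.univ : Set ℝ)) : Set (ℝ × ℝ)) :=
    ((convex_Ioi R).prod convex_univ).isPreconnected
  have hB : IsPreconnected ((Set.Iio (-R) ×ˢ (Set.univ : Set ℝ)) : Set (ℝ × ℝ)) :=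
    ((convex_Iio (-R)).prod convex_univ).isPreconnected
  have hC : IsPreconnected (((Set.univ : Set ℝ) ×ˢ Set.Ioi R) : Set (ℝ × ℝ)) :=
    (convex_univ.prod (convex_Ioi R)).isPreconnected
  have hD : IsPreconnected (((Set.univ : Set ℝ) ×ˢ Set.Iio (-R)) : Set (ℝ × ℝ)) :=
    (convex_univ.prod (convex_Iio (-R))).isPreconnected
  have hAC : IsPreconnected ((Set.Ioi R ×ˢ (Set.univ : Set ℝ)) ∪ ((Set.univ : Set ℝ) ×ˢ Set.Ioi R)) := by
    apply IsPreconnected.union (R+1, R+1) _ _ hA hC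
    · exact ⟨by simp, trivial⟩
    · exact ⟨trivial, by simp⟩
  have hACB : IsPreconnected ((Set.Ioi R ×ˢ (Set.univ : Set ℝ)) ∪ ((Set.univ : Set ℝ) ×ˢ Set.Ioi R)
      ∪ (Set.Iio (-R) ×ˢ (Set.univ : Set ℝ))) := by
    apply IsPreconnected.union (-R-1, R+1) _ _ hAC hB
    · exact Or.inr ⟨trivial, by simp⟩
    · exact ⟨by simp, trivial⟩
  have hall : IsPreconnected (((Set.Ioi R ×ˢ (Set.univ : Set ℝ)) ∪ ((Set.univ : Set ℝ) ×ˢ Set.Ioi R)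
      ∪ (Set.Iio (-R) ×ˢ (Set.univ : Set ℝ))) ∪ ((Set.univ : Set ℝ) ×ˢ Set.Iio (-R))) := by
    apply IsPreconnected.union (R+1, -R-1) _ _ hACB hD
    · exact Or.inl (Or.inl ⟨by simp, trivial⟩)
    · exact ⟨trivial, by simp⟩
  have hset : (Metric.closedBall ((0,0) : ℝ × ℝ) R)ᶜ =
      ((Set.Ioi R ×ˢ (Set.univ : Set ℝ)) ∪ ((Set.univ : Set ℝ) ×ˢ Set.Ioi R)
      ∪ (Set.Iio (-R) ×ˢ (Set.univ : Set ℝ))) ∪ ((Set.univ : Set ℝ) ×ˢ Set.Iio (-R)) := by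
    ext ⟨x, y⟩
    simp only [Set.mem_compl_iff, Metric.mem_closedBall, Prod.dist_eq, Real.dist_eq,
      sub_zero, Set.mem_union, Set.mem_prod, Set.mem_Ioi, Set.mem_Iio, Set.mem_univ,
      and_true, true_and]
    rw [not_le, lt_max_iff, lt_abs, lt_abs]
    constructor
    · rintro ((h | h) | (h | h))
      · exact Or.inl (Or.inl (Or.inl h))
      · exact Or.inl (Or.inr (by linarith))
      · exact Or.inl (Or.inl (Or.inr h))
      · exact Or.inr (by linarith)
    · rintro (((h | h) | h) | h)
      · exact Or.inl (Or.inl h)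
      · exact Or.inr (Or.inl h)
      · exact Or.inl (Or.inr (by linarith))
      · exact Or.inr (Or.inr (by linarith))
  rw [hset]
  exact hall
end GF
namespace GF

/-! ### No extension homeomorphism onto the whole plane -/

lemma no_ext_univ {a b c d : ℝ} (ha : a ∈ Set.Ioo (0:ℝ) 1) (hb : b ∈ Set.Ioo (0:ℝ) 1)
    (hc : c ∈ Set.Ioo (0:ℝ) 1) (hd : d ∈ Set.Ioo (0:ℝ) 1) (F G : ℝ × ℝ → ℝ × ℝ)
    (h : HomeoOn F G (closedSq \ {(a,(0:ℝ)), ((1:ℝ),b), (c,(1:ℝ)), ((0:ℝ),d)}) Set.univ) :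
    False := by
  set S : Set (ℝ × ℝ) := {(a,(0:ℝ)), ((1:ℝ),b), (c,(1:ℝ)), ((0:ℝ),d)} with hS
  set D := closedSq \ S with hDdef
  set ε := min b d / 2 with hεdef
  have hε0 : 0 < ε := by
    have := lt_min hb.1 hd.1; positivity
  set V₁ := Metric.ball ((a,(0:ℝ)) : ℝ × ℝ) ε with hV₁
  set V₂ := Metric.ball (((1:ℝ),b) : ℝ × ℝ) ε ∪ Metric.ball ((c,(1:ℝ)) : ℝ × ℝ) ε ∪
      Metric.ball (((0:ℝ),d) : ℝ × ℝ) ε with hV₂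
  -- the three distances from (a,0) to the other removed points are at least `min b d`
  have key : ∀ m ∈ ({((1:ℝ),b), (c,(1:ℝ)), ((0:ℝ),d)} : Set (ℝ × ℝ)),
      min b d ≤ dist ((a,(0:ℝ)) : ℝ × ℝ) m := by
    rintro m (rfl | rfl | rfl)
    · rw [Prod.dist_eq, Real.dist_eq, Real.dist_eq]
      calc min b d ≤ b := min_le_left _ _
        _ = |(0:ℝ) - b| := by rw [zero_sub, abs_neg, abs_of_pos hb.1]
        _ ≤ _ := le_max_right _ _
    · rw [Prod.dist_eq, Real.dist_eq, Real.dist_eq]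
      calc min b d ≤ b := min_le_left _ _
        _ ≤ 1 := hb.2.le
        _ = |(0:ℝ) - 1| := by norm_num
        _ ≤ _ := le_max_right _ _
    · rw [Prod.dist_eq, Real.dist_eq, Real.dist_eq]
      calc min b d ≤ d := min_le_right _ _
        _ = |(0:ℝ) - d| := by rw [zero_sub, abs_neg, abs_of_pos hd.1]
        _ ≤ _ := le_max_right _ _
  have hdisj : ∀ x, x ∈ V₁ → x ∈ V₂ → False := by
    intro x hx1 hx2
    have h1 : dist x ((a,(0:ℝ)) : ℝ × ℝ) < ε := hx1
    have : ∃ m ∈ ({((1:ℝ),b), (c,(1:ℝ)), ((0:ℝ),d)} : Set (ℝ × ℝ)), dist x m < ε := by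
      rcases hx2 with (hm | hm) | hm
      · exact ⟨((1:ℝ),b), by left; rfl, hm⟩
      · exact ⟨(c,(1:ℝ)), by right; left; rfl, hm⟩
      · exact ⟨((0:ℝ),d), by right; right; rfl, hm⟩
    obtain ⟨m, hmS, hm⟩ := this
    have h3 := key m hmS
    have h4 : dist ((a,(0:ℝ)) : ℝ × ℝ) m ≤ dist ((a,(0:ℝ)) : ℝ × ℝ) x + dist x m :=
      dist_triangle _ _ _
    rw [dist_comm] at h1
    have : min b d < min b d := by
      calc min b d ≤ dist ((a,(0:ℝ)) : ℝ × ℝ) m := h3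
        _ ≤ dist ((a,(0:ℝ)) : ℝ × ℝ) x + dist x m := h4
        _ < ε + ε := by linarith
        _ = min b d := by rw [hεdef]; ring
    exact lt_irrefl _ this
  set K₀ := closedSq \ (V₁ ∪ V₂) with hK₀
  have hsqc : IsCompact closedSq := by
    unfold closedSq; exact isCompact_Icc.prod isCompact_Icc
  have hV₁o : IsOpen V₁ := Metric.isOpen_ball
  have hV₂o : IsOpen V₂ :=
    (Metric.isOpen_ball.union Metric.isOpen_ball).union Metric.isOpen_ball
  have hK₀c : IsCompact K₀ := hsqc.diff (hV₁o.union hV₂o)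
  have hK₀D : K₀ ⊆ D := by
    rintro x ⟨hxsq, hxV⟩
    refine ⟨hxsq, fun hxS => hxV ?_⟩
    rcases hxS with rfl | rfl | rfl | rfl
    · exact Or.inl (Metric.mem_ball_self hε0)
    · exact Or.inr (Or.inl (Or.inl (Metric.mem_ball_self hε0)))
    · exact Or.inr (Or.inl (Or.inr (Metric.mem_ball_self hε0)))
    · exact Or.inr (Or.inr (Metric.mem_ball_self hε0))
  have hFK : IsCompact (F '' K₀) := hK₀c.image_of_continuousOn (h.contOn.mono hK₀D)
  obtain ⟨R0, hR0⟩ := hFK.isBounded.subset_closedBall ((0,0) : ℝ × ℝ)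
  set R := max R0 1 with hRdef
  have hR1 : (0:ℝ) < R := lt_of_lt_of_le one_pos (le_max_right _ _)
  have hsub : F '' K₀ ⊆ Metric.closedBall ((0,0) : ℝ × ℝ) R :=
    hR0.trans (Metric.closedBall_subset_closedBall (le_max_left _ _))
  set W := (Metric.closedBall ((0,0) : ℝ × ℝ) R)ᶜ with hWdef
  have hW : IsPreconnected W := preconn_compl_ball R hR1
  have hG : Continuous G := continuousOn_univ.mp h.contOn_inv
  set E := G '' W with hEdef
  have hEpre : IsPreconnected E := hW.image G hG.continuousOn
  set K' := G '' Metric.closedBall ((0,0) : ℝ × ℝ) R with hK'def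
  have hK'D : K' ⊆ D := by
    rintro _ ⟨w, _, rfl⟩
    exact h.mapsTo_inv (Set.mem_univ w)
  have hK'c : IsCompact K' := (isCompact_closedBall _ _).image hG
  have hright : ∀ y, F (G y) = y := fun y => h.right_inv y (Set.mem_univ y)
  have hED : E ⊆ D := by
    rintro _ ⟨w, _, rfl⟩
    exact h.mapsTo_inv (Set.mem_univ w)
  have hEV : E ⊆ V₁ ∪ V₂ := by
    rintro _ ⟨w, hw, rfl⟩
    by_contra hnot
    have hK : G w ∈ K₀ := ⟨(h.mapsTo_inv (Set.mem_univ w)).1, hnot⟩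
    have : F (G w) ∈ Metric.closedBall ((0,0) : ℝ × ℝ) R := hsub (Set.mem_image_of_mem F hK)
    rw [hright w] at this
    exact hw this
  -- produce a point of `E` in each of `V₁` and `V₂`
  have hpoint : ∀ m : ℝ × ℝ, m ∈ S → ∀ q : ℝ × ℝ, q ∈ D → q ∉ K' → dist q m < ε →
      q ∈ E ∧ q ∈ Metric.ball m ε := by
    intro m _ q hqD hqK' hqd
    refine ⟨?_, hqd⟩
    have hFq : F q ∈ W := by
      intro hball
      exact hqK' (by rw [← h.left_inv q hqD]; exact Set.mem_image_of_mem G hball)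
    exact ⟨F q, hFq, h.left_inv q hqD⟩
  -- the point near (a,0)
  have hm₁ : ((a,(0:ℝ)) : ℝ × ℝ) ∉ K' := by
    intro hmem
    exact (hK'D hmem).2 (by left; rfl)
  obtain ⟨r₁, hr₁0, hr₁⟩ := Metric.isOpen_iff.mp hK'c.isClosed.isOpen_compl _ hm₁
  set t₁ := min (min r₁ ε) 1 / 2 with ht₁def
  have ht₁0 : 0 < t₁ := by
    have := lt_min (lt_min hr₁0 hε0) one_pos; positivity
  have ht₁r : t₁ < r₁ := by
    have h1 : min (min r₁ ε) 1 ≤ r₁ := le_trans (min_le_left _ _) (min_le_left _ _)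
    linarith
  have ht₁ε : t₁ < ε := by
    have h1 : min (min r₁ ε) 1 ≤ ε := le_trans (min_le_left _ _) (min_le_right _ _)
    linarith
  have ht₁1 : t₁ ≤ 1/2 := by
    have h1 : min (min r₁ ε) 1 ≤ 1 := min_le_right _ _
    linarith
  set q₁ : ℝ × ℝ := (a, t₁) with hq₁def
  have hq₁D : q₁ ∈ D := by
    constructor
    · simp only [hq₁def, closedSq, Set.mem_prod, Set.mem_Icc]
      refine ⟨⟨ha.1.le, ha.2.le⟩, ht₁0.le, by linarith⟩
    · intro hq
      rcases hq with hq | hq | hq | hq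
      · exact ht₁0.ne' (congrArg Prod.snd hq)
      · exact ha.2.ne (congrArg Prod.fst hq)
      · have := congrArg Prod.snd hq; simp at this; linarith
      · exact ha.1.ne' (congrArg Prod.fst hq)
  have hq₁dist : dist q₁ ((a,(0:ℝ)) : ℝ × ℝ) = t₁ := by
    rw [hq₁def, Prod.dist_eq, Real.dist_eq, Real.dist_eq]
    simp [abs_of_pos ht₁0]
    exact ht₁0.le
  have hq₁K' : q₁ ∉ K' := by
    intro hmem
    exact hr₁ (by rw [Metric.mem_ball, hq₁dist]; exact ht₁r) hmem
  obtain ⟨hq₁E, hq₁V⟩ := hpoint _ (by left; rfl) q₁ hq₁D hq₁K'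
    (by rw [hq₁dist]; exact ht₁ε)
  -- the point near (1,b)
  have hm₂ : (((1:ℝ),b) : ℝ × ℝ) ∉ K' := by
    intro hmem
    exact (hK'D hmem).2 (by right; left; rfl)
  obtain ⟨r₂, hr₂0, hr₂⟩ := Metric.isOpen_iff.mp hK'c.isClosed.isOpen_compl _ hm₂
  set t₂ := min (min r₂ ε) 1 / 2 with ht₂def
  have ht₂0 : 0 < t₂ := by
    have := lt_min (lt_min hr₂0 hε0) one_pos; positivity
  have ht₂r : t₂ < r₂ := by
    have h1 : min (min r₂ ε) 1 ≤ r₂ := le_trans (min_le_left _ _) (min_le_left _ _)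
    linarith
  have ht₂ε : t₂ < ε := by
    have h1 : min (min r₂ ε) 1 ≤ ε := le_trans (min_le_left _ _) (min_le_right _ _)
    linarith
  have ht₂1 : t₂ ≤ 1/2 := by
    have h1 : min (min r₂ ε) 1 ≤ 1 := min_le_right _ _
    linarith
  set q₂ : ℝ × ℝ := (1 - t₂, b) with hq₂def
  have hq₂D : q₂ ∈ D := by
    constructor
    · simp only [hq₂def, closedSq, Set.mem_prod, Set.mem_Icc]
      refine ⟨⟨by linarith, by linarith⟩, hb.1.le, hb.2.le⟩
    · intro hq
      rcases hq with hq | hq | hq | hq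
      · exact hb.1.ne' (congrArg Prod.snd hq)
      · have := congrArg Prod.fst hq; simp at this; linarith
      · exact hb.2.ne (congrArg Prod.snd hq)
      · have := congrArg Prod.fst hq; simp at this; linarith
  have hq₂dist : dist q₂ (((1:ℝ),b) : ℝ × ℝ) = t₂ := by
    rw [hq₂def, Prod.dist_eq, Real.dist_eq, Real.dist_eq]
    have : |1 - t₂ - 1| = t₂ := by rw [show (1:ℝ) - t₂ - 1 = -t₂ by ring, abs_neg, abs_of_pos ht₂0]
    simp [this]
    exact ht₂0.le
  have hq₂K' : q₂ ∉ K' := by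
    intro hmem
    exact hr₂ (by rw [Metric.mem_ball, hq₂dist]; exact ht₂r) hmem
  obtain ⟨hq₂E, hq₂V⟩ := hpoint _ (by right; left; rfl) q₂ hq₂D hq₂K'
    (by rw [hq₂dist]; exact ht₂ε)
  -- contradiction with preconnectedness
  obtain ⟨z, _, hz₁, hz₂⟩ := hEpre V₁ V₂ hV₁o hV₂o hEV ⟨q₁, hq₁E, hq₁V⟩
    ⟨q₂, hq₂E, Or.inl (Or.inl hq₂V)⟩
  exact hdisj z hz₁ hz₂
end GF
namespace GF

/-! ### Nondegeneracy of looms -/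

/-- If the two leaves through a point of a rectangle agree, the whole rectangle is
contained in that leaf. -/
lemma rect_sub {L : LoomPre} {R : Set (ℝ × ℝ)} (hR : L.IsRect R) {p : ℝ × ℝ}
    (hp : p ∈ R) (hup : L.upLeaf p = L.loLeaf p) : R ⊆ L.upLeaf p := by
  obtain ⟨-, Φ, Ψ, hpar⟩ := hR
  have hpim : p ∈ Φ '' unitSq := by rw [hpar.image]; exact hp
  obtain ⟨z, hz, hΦz⟩ := hpim
  intro r hr
  have hrim : r ∈ Φ '' unitSq := by rw [hpar.image]; exact hr
  obtain ⟨x, hx, hΦx⟩ := hrim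
  have hmem : ((x.1, z.2) : ℝ × ℝ) ∈ unitSq := ⟨hx.1, hz.2⟩
  have h1 : Φ (x.1, z.2) ∈ L.loLeaf (Φ z) := hpar.horiz (x.1, z.2) hmem z hz rfl
  rw [hΦz, ← hup] at h1
  have h2 : L.upLeaf (Φ (x.1, z.2)) = L.upLeaf p := L.upLeaf_eq p _ h1
  have h3 : Φ x ∈ L.upLeaf (Φ (x.1, z.2)) := hpar.vert x hx (x.1, z.2) hmem rfl
  rw [h2, hΦx] at h3
  exact h3

/-- In a loom, the two leaves through any point are distinct. -/
lemma nondegen {L : LoomPre} (hL : IsLoom L) (p : ℝ × ℝ) : L.upLeaf p ≠ L.loLeaf p := by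
  intro hup
  set ℓ := L.upLeaf p with hℓ
  have hmem : ∀ m ∈ ℓ, L.upLeaf m = ℓ ∧ L.loLeaf m = ℓ := by
    intro m hm
    constructor
    · exact L.upLeaf_eq p m hm
    · have : m ∈ L.loLeaf p := by rw [← hup]; exact hm
      rw [L.loLeaf_eq p m this, ← hup]
  have hrect : ∀ R, L.IsRect R → ∀ m ∈ R, m ∈ ℓ → R ⊆ ℓ := by
    intro R hR m hmR hmℓ
    have h1 : L.upLeaf m = L.loLeaf m := by
      rw [(hmem m hmℓ).1, (hmem m hmℓ).2]
    have h2 := rect_sub hR hmR h1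
    rw [(hmem m hmℓ).1] at h2
    exact h2
  have hopen : IsOpen ℓ := by
    rw [isOpen_iff_mem_nhds]
    intro m hm
    obtain ⟨R, hR, hmR⟩ := hL.basis m
    exact Filter.mem_of_superset (hR.1.mem_nhds hmR) (hrect R hR m hmR hm)
  have hclosed : IsClosed ℓ := by
    apply isClosed_of_closure_subset
    intro r hrcl
    obtain ⟨R, hR, hrR⟩ := hL.basis r
    obtain ⟨m, hmR, hmℓ⟩ := mem_closure_iff.mp hrcl R hR.1 hrR
    exact hrect R hR m hmR hmℓ hrR
  have huniv : ℓ = Set.univ := by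
    rcases isClopen_iff.mp ⟨hclosed, hopen⟩ with h | h
    · exact absurd (h ▸ L.mem_upLeaf p : p ∈ (∅ : Set (ℝ × ℝ))) (Set.notMem_empty p)
    · exact h
  have hall : ∀ m : ℝ × ℝ, L.upLeaf m = Set.univ ∧ L.loLeaf m = Set.univ := by
    intro m
    have := hmem m (by rw [huniv]; trivial)
    rw [huniv] at this
    exact this
  -- the whole plane is then a rectangle
  set F₀ : ℝ × ℝ → ℝ × ℝ := fun x => (g0 x.1, g0 x.2) with hF₀
  set G₀ : ℝ × ℝ → ℝ × ℝ := fun y => (h0 y.1, h0 y.2) with hG₀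
  have hmapsTo : Set.MapsTo G₀ Set.univ unitSq := fun y _ => ⟨h0_mem y.1, h0_mem y.2⟩
  have hcontF : ContinuousOn F₀ unitSq := by
    apply ContinuousOn.prodMk
    · exact contOn_g0.comp continuousOn_fst (fun x hx => hx.1)
    · exact contOn_g0.comp continuousOn_snd (fun x hx => hx.2)
  have hrectuniv : L.IsRect Set.univ := by
    refine ⟨isOpen_univ, F₀, G₀, ⟨?_, ?_, ?_, ?_⟩⟩
    · exact { contOn := hcontF
              mapsTo := fun x _ => Set.mem_univ _
              contOn_inv := ((cont_h0.comp continuous_fst).prodMk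
                (cont_h0.comp continuous_snd)).continuousOn
              mapsTo_inv := hmapsTo
              left_inv := fun x hx => by
                simp only [hF₀, hG₀]
                exact Prod.ext (h0_g0 hx.1) (h0_g0 hx.2)
              right_inv := fun y _ => by
                simp only [hF₀, hG₀]
                exact Prod.ext (g0_h0 y.1) (g0_h0 y.2) }
    · apply Set.eq_univ_of_forall
      intro y
      exact ⟨(h0 y.1, h0 y.2), ⟨h0_mem y.1, h0_mem y.2⟩, Prod.ext (g0_h0 y.1) (g0_h0 y.2)⟩
    · intro x _ y _ _
      rw [(hall (F₀ y)).2]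
      trivial
    · intro x _ y _ _
      rw [(hall (F₀ y)).1]
      trivial
  obtain ⟨T, hTtet, hTsub⟩ := hL.tet_ax Set.univ hrectuniv
  have hT : T = Set.univ := Set.eq_univ_of_univ_subset hTsub
  rw [hT] at hTtet
  obtain ⟨a, b, c, d, -, ha, hb, hc, hd, F, G, -, hhom⟩ := hTtet
  rw [closure_univ] at hhom
  exact no_ext_univ ha hb hc hd F G hhom

end GF
namespace GF

/-! ### Global dichotomy for loom isomorphisms -/

lemma dichotomy {L M : LoomPre} (hL : IsLoom L) (hM : IsLoom M) {f : ℝ × ℝ → ℝ × ℝ}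
    (hf : IsLoomIso L M f) :
    (∀ p, f '' L.upLeaf p = M.upLeaf (f p) ∧ f '' L.loLeaf p = M.loLeaf (f p)) ∨
    (∀ p, f '' L.upLeaf p = M.loLeaf (f p) ∧ f '' L.loLeaf p = M.upLeaf (f p)) := by
  have hinj : Function.Injective f := hf.1.bijective.injective
  have himg := hinj.image_injective
  have ndL := nondegen hL
  have ndM := nondegen hM
  set Sno := {p : ℝ × ℝ | f '' L.loLeaf p = M.loLeaf (f p)} with hSno
  set Ssw := {p : ℝ × ℝ | f '' L.loLeaf p = M.upLeaf (f p)} with hSsw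
  -- the lower-leaf behaviour determines the upper-leaf behaviour
  have up_no : ∀ p ∈ Sno, f '' L.upLeaf p = M.upLeaf (f p) := by
    intro p hp
    rcases (hf.2 p).1 with h | h
    · exact h
    · exact absurd (himg (h.trans hp.symm)) (ndL p)
  have up_sw : ∀ p ∈ Ssw, f '' L.upLeaf p = M.loLeaf (f p) := by
    intro p hp
    rcases (hf.2 p).1 with h | h
    · exact absurd (himg (h.trans hp.symm)) (ndL p)
    · exact h
  have hdisj : ∀ p, p ∈ Sno → p ∈ Ssw → False := by
    intro p h1 h2
    exact ndM (f p) (h2.symm.trans h1)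
  -- membership in Sno/Ssw is constant on rectangles
  have prop_no : ∀ R, L.IsRect R → ∀ p ∈ R, p ∈ Sno → R ⊆ Sno := by
    intro R hR p hpR hpno
    obtain ⟨-, Φ, Ψ, hpar⟩ := hR
    obtain ⟨z, hz, hΦz⟩ := (by rw [hpar.image]; exact hpR : p ∈ Φ '' unitSq)
    intro r hrR
    obtain ⟨x, hx, hΦx⟩ := (by rw [hpar.image]; exact hrR : r ∈ Φ '' unitSq)
    have hmem : ((x.1, z.2) : ℝ × ℝ) ∈ unitSq := ⟨hx.1, hz.2⟩
    set m := Φ (x.1, z.2) with hm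
    have hm_lo : m ∈ L.loLeaf p := by
      have := hpar.horiz (x.1, z.2) hmem z hz rfl
      rwa [hΦz] at this
    have hlo_m : L.loLeaf m = L.loLeaf p := L.loLeaf_eq p m hm_lo
    have hfm : f m ∈ M.loLeaf (f p) := by
      have := Set.mem_image_of_mem f hm_lo
      rwa [hpno] at this
    have hMlo : M.loLeaf (f m) = M.loLeaf (f p) := M.loLeaf_eq (f p) (f m) hfm
    have hm_no : m ∈ Sno := by
      show f '' L.loLeaf m = M.loLeaf (f m)
      rw [hlo_m, hMlo, hpno]
    have hup_m := up_no m hm_no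
    have hr_up : r ∈ L.upLeaf m := by
      have := hpar.vert x hx (x.1, z.2) hmem rfl
      rwa [hΦx] at this
    have hfr : f r ∈ M.upLeaf (f m) := by
      have := Set.mem_image_of_mem f hr_up
      rwa [hup_m] at this
    have hup_r : f '' L.upLeaf r = M.upLeaf (f r) := by
      rw [L.upLeaf_eq m r hr_up, M.upLeaf_eq (f m) (f r) hfr, hup_m]
    rcases (hf.2 r).2 with h | h
    · exact absurd (himg (h.trans hup_r.symm)).symm (ndL r)
    · exact h
  have prop_sw : ∀ R, L.IsRect R → ∀ p ∈ R, p ∈ Ssw → R ⊆ Ssw := by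
    intro R hR p hpR hpsw
    obtain ⟨-, Φ, Ψ, hpar⟩ := hR
    obtain ⟨z, hz, hΦz⟩ := (by rw [hpar.image]; exact hpR : p ∈ Φ '' unitSq)
    intro r hrR
    obtain ⟨x, hx, hΦx⟩ := (by rw [hpar.image]; exact hrR : r ∈ Φ '' unitSq)
    have hmem : ((x.1, z.2) : ℝ × ℝ) ∈ unitSq := ⟨hx.1, hz.2⟩
    set m := Φ (x.1, z.2) with hm
    have hm_lo : m ∈ L.loLeaf p := by
      have := hpar.horiz (x.1, z.2) hmem z hz rfl
      rwa [hΦz] at this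
    have hlo_m : L.loLeaf m = L.loLeaf p := L.loLeaf_eq p m hm_lo
    have hfm : f m ∈ M.upLeaf (f p) := by
      have := Set.mem_image_of_mem f hm_lo
      rwa [hpsw] at this
    have hMup : M.upLeaf (f m) = M.upLeaf (f p) := M.upLeaf_eq (f p) (f m) hfm
    have hm_sw : m ∈ Ssw := by
      show f '' L.loLeaf m = M.upLeaf (f m)
      rw [hlo_m, hMup, hpsw]
    have hup_m := up_sw m hm_sw
    have hr_up : r ∈ L.upLeaf m := by
      have := hpar.vert x hx (x.1, z.2) hmem rfl
      rwa [hΦx] at this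
    have hfr : f r ∈ M.loLeaf (f m) := by
      have := Set.mem_image_of_mem f hr_up
      rwa [hup_m] at this
    have hup_r : f '' L.upLeaf r = M.loLeaf (f r) := by
      rw [L.upLeaf_eq m r hr_up, M.loLeaf_eq (f m) (f r) hfr, hup_m]
    rcases (hf.2 r).2 with h | h
    · exact h
    · exact absurd (himg (h.trans hup_r.symm)).symm (ndL r)
  have open_no : IsOpen Sno := by
    rw [isOpen_iff_mem_nhds]
    intro p hp
    obtain ⟨R, hR, hpR⟩ := hL.basis p
    exact Filter.mem_of_superset (hR.1.mem_nhds hpR) (prop_no R hR p hpR hp)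
  have open_sw : IsOpen Ssw := by
    rw [isOpen_iff_mem_nhds]
    intro p hp
    obtain ⟨R, hR, hpR⟩ := hL.basis p
    exact Filter.mem_of_superset (hR.1.mem_nhds hpR) (prop_sw R hR p hpR hp)
  have hcover : (Set.univ : Set (ℝ × ℝ)) ⊆ Sno ∪ Ssw := by
    intro p _
    rcases (hf.2 p).2 with h | h
    · exact Or.inr h
    · exact Or.inl h
  by_cases hno : ∀ p, p ∈ Sno
  · left
    exact fun p => ⟨up_no p (hno p), hno p⟩
  · push_neg at hno
    obtain ⟨p₀, hp₀⟩ := hno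
    have hp₀sw : p₀ ∈ Ssw := (hcover (Set.mem_univ p₀)).resolve_left hp₀
    by_cases hsw : ∀ p, p ∈ Ssw
    · right
      exact fun p => ⟨up_sw p (hsw p), hsw p⟩
    · push_neg at hsw
      obtain ⟨p₁, hp₁⟩ := hsw
      have hp₁no : p₁ ∈ Sno := (hcover (Set.mem_univ p₁)).resolve_right hp₁
      obtain ⟨z, -, hz₁, hz₂⟩ := isPreconnected_univ Sno Ssw open_no open_sw hcover
        ⟨p₁, Set.mem_univ p₁, hp₁no⟩ ⟨p₀, Set.mem_univ p₀, hp₀sw⟩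
      exact absurd hz₂ (fun h => hdisj z hz₁ h)

end GF
namespace GF

/-! ### Transport of rectangles and extensions -/

/-- Transposing a loom pre-structure (swapping the two foliations). -/
def transpose (L : LoomPre) : LoomPre where
  upLeaf := L.loLeaf
  loLeaf := L.upLeaf
  mem_upLeaf := L.mem_loLeaf
  mem_loLeaf := L.mem_upLeaf
  upLeaf_eq := L.loLeaf_eq
  loLeaf_eq := L.upLeaf_eq
  upLeaf_conn := L.loLeaf_conn
  loLeaf_conn := L.upLeaf_conn

lemma swap_unitSq : Prod.swap '' unitSq = unitSq := by
  unfold unitSq; rw [Set.image_swap_prod]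

lemma swap_closedSq : Prod.swap '' closedSq = closedSq := by
  unfold closedSq; rw [Set.image_swap_prod]

lemma homeoOn_swap {F G : ℝ × ℝ → ℝ × ℝ} {D R' : Set (ℝ × ℝ)} (h : HomeoOn F G D R') :
    HomeoOn (F ∘ Prod.swap) (Prod.swap ∘ G) (Prod.swap '' D) R' := by
  have hmaps : Set.MapsTo Prod.swap (Prod.swap '' D) D := by
    rintro _ ⟨y, hy, rfl⟩
    rwa [Prod.swap_swap]
  exact
    { contOn := h.contOn.comp continuous_swap.continuousOn hmaps
      mapsTo := fun x hx => h.mapsTo (hmaps hx)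
      contOn_inv := continuous_swap.comp_continuousOn h.contOn_inv
      mapsTo_inv := fun y hy => Set.mem_image_of_mem _ (h.mapsTo_inv hy)
      left_inv := fun x hx => by
        rw [Function.comp_apply, Function.comp_apply, h.left_inv _ (hmaps hx), Prod.swap_swap]
      right_inv := fun y hy => by
        rw [Function.comp_apply, Function.comp_apply, Prod.swap_swap, h.right_inv y hy] }

lemma param_swap {L : LoomPre} {F G : ℝ × ℝ → ℝ × ℝ} {R : Set (ℝ × ℝ)}
    (h : L.IsRectParam F G R) :
    (transpose L).IsRectParam (F ∘ Prod.swap) (Prod.swap ∘ G) R where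
  homeo := by
    have := homeoOn_swap h.homeo
    rwa [swap_unitSq] at this
  image := by
    rw [Set.image_comp, swap_unitSq, h.image]
  horiz := fun x hx y hy hxy =>
    h.vert _ ⟨hx.2, hx.1⟩ _ ⟨hy.2, hy.1⟩ (by simpa using hxy)
  vert := fun x hx y hy hxy =>
    h.horiz _ ⟨hx.2, hx.1⟩ _ ⟨hy.2, hy.1⟩ (by simpa using hxy)

lemma rectext_swap {L : LoomPre} {S R : Set (ℝ × ℝ)} {F G : ℝ × ℝ → ℝ × ℝ}
    (h : L.RectExt S R F G) :
    (transpose L).RectExt (Prod.swap '' S) R (F ∘ Prod.swap) (Prod.swap ∘ G) := by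
  refine ⟨param_swap h.1, ?_⟩
  have h2 := homeoOn_swap h.2
  rwa [Set.image_diff Prod.swap_injective, swap_closedSq] at h2

lemma rect_swap {L : LoomPre} {R : Set (ℝ × ℝ)} (h : L.IsRect R) :
    (transpose L).IsRect R := by
  obtain ⟨ho, F, G, hp⟩ := h
  exact ⟨ho, _, _, param_swap hp⟩

lemma param_map {L M : LoomPre} (e : (ℝ × ℝ) ≃ₜ (ℝ × ℝ))
    (hor : ∀ p q, q ∈ L.loLeaf p → e q ∈ M.loLeaf (e p))
    (ver : ∀ p q, q ∈ L.upLeaf p → e q ∈ M.upLeaf (e p))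
    {F G : ℝ × ℝ → ℝ × ℝ} {R : Set (ℝ × ℝ)} (h : L.IsRectParam F G R) :
    M.IsRectParam (⇑e ∘ F) (G ∘ ⇑e.symm) (⇑e '' R) where
  homeo :=
    { contOn := e.continuous.comp_continuousOn h.homeo.contOn
      mapsTo := fun x hx => Set.mem_image_of_mem e (h.homeo.mapsTo hx)
      contOn_inv := h.homeo.contOn_inv.comp e.symm.continuous.continuousOn
        (by rintro _ ⟨x, hx, rfl⟩; rw [Homeomorph.symm_apply_apply]; exact hx)
      mapsTo_inv := by
        rintro _ ⟨x, hx, rfl⟩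
        rw [Function.comp_apply, Homeomorph.symm_apply_apply]
        exact h.homeo.mapsTo_inv hx
      left_inv := fun x hx => by
        rw [Function.comp_apply, Function.comp_apply, Homeomorph.symm_apply_apply,
          h.homeo.left_inv x hx]
      right_inv := by
        rintro _ ⟨x, hx, rfl⟩
        rw [Function.comp_apply, Function.comp_apply, Homeomorph.symm_apply_apply,
          h.homeo.right_inv x hx] }
  image := by rw [Set.image_comp, h.image]
  horiz := fun x hx y hy hxy => hor _ _ (h.horiz x hx y hy hxy)
  vert := fun x hx y hy hxy => ver _ _ (h.vert x hx y hy hxy)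

lemma rect_map {L M : LoomPre} (e : (ℝ × ℝ) ≃ₜ (ℝ × ℝ))
    (hor : ∀ p q, q ∈ L.loLeaf p → e q ∈ M.loLeaf (e p))
    (ver : ∀ p q, q ∈ L.upLeaf p → e q ∈ M.upLeaf (e p))
    {R : Set (ℝ × ℝ)} (h : L.IsRect R) : M.IsRect (⇑e '' R) := by
  obtain ⟨ho, F, G, hp⟩ := h
  exact ⟨e.isOpen_image.mpr ho, _, _, param_map e hor ver hp⟩

lemma rectext_map {L M : LoomPre} (e : (ℝ × ℝ) ≃ₜ (ℝ × ℝ))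
    (hor : ∀ p q, q ∈ L.loLeaf p → e q ∈ M.loLeaf (e p))
    (ver : ∀ p q, q ∈ L.upLeaf p → e q ∈ M.upLeaf (e p))
    {S R : Set (ℝ × ℝ)} {F G : ℝ × ℝ → ℝ × ℝ} (h : L.RectExt S R F G) :
    M.RectExt S (⇑e '' R) (⇑e ∘ F) (G ∘ ⇑e.symm) := by
  have hclos : ⇑e '' closure R = closure (⇑e '' R) := e.image_closure R
  refine ⟨param_map e hor ver h.1, ?_⟩
  exact
    { contOn := e.continuous.comp_continuousOn h.2.contOn
      mapsTo := fun x hx => by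
        rw [← hclos]
        exact Set.mem_image_of_mem e (h.2.mapsTo hx)
      contOn_inv := h.2.contOn_inv.comp e.symm.continuous.continuousOn
        (by
          intro y hy
          rw [← hclos] at hy
          obtain ⟨x, hx, rfl⟩ := hy
          rw [Homeomorph.symm_apply_apply]; exact hx)
      mapsTo_inv := by
        intro y hy
        rw [← hclos] at hy
        obtain ⟨x, hx, rfl⟩ := hy
        rw [Function.comp_apply, Homeomorph.symm_apply_apply]
        exact h.2.mapsTo_inv hx
      left_inv := fun x hx => by
        rw [Function.comp_apply, Function.comp_apply, Homeomorph.symm_apply_apply,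
          h.2.left_inv x hx]
      right_inv := by
        intro y hy
        rw [← hclos] at hy
        obtain ⟨x, hx, rfl⟩ := hy
        rw [Function.comp_apply, Function.comp_apply, Homeomorph.symm_apply_apply,
          h.2.right_inv x hx] }

end GF
/-- Guéritaud's construction is a functor from the category of loom spaces to the
category of locally veering triangulations: a loom isomorphism `f : L → M` induces a
map of the induced triangulations (sending the cell of a skeletal rectangle `P` to the
cell of `f '' P`) which is a taut isomorphism; moreover identities induce identities
and compositions induce compositions. -/
theorem gueritaud_functorial (L M : LoomPre) (hL : IsLoom L) (hM : IsLoom M)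
    (f : ℝ × ℝ → ℝ × ℝ) (hf : IsLoomIso L M f) :
    -- f sends skeletal rectangles of L to skeletal rectangles of M
    (∀ P, L.IsTetRect P → M.IsTetRect (f '' P)) ∧
    (∀ P, L.IsFaceRect P → M.IsFaceRect (f '' P)) ∧
    (∀ P, L.IsEdgeRect P → M.IsEdgeRect (f '' P)) ∧
    -- f sends face pairings to face pairings
    (∀ P Q, L.IsTetRect P → L.IsTetRect Q → P ≠ Q → L.IsFaceRect (P ∩ Q) →
      M.IsFaceRect (f '' P ∩ f '' Q)) ∧
    -- f preserves the induced taut structure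
    (∀ E P, L.IsEdgeRect E → L.IsTetRect P → E ⊆ P →
      (Spans L E P ↔ Spans M (f '' E) (f '' P))) ∧
    -- the induced map is invertible, hence a taut isomorphism
    (∃ finv, IsLoomIso M L finv ∧ (∀ P : Set (ℝ × ℝ), finv '' (f '' P) = P) ∧
      (∀ P : Set (ℝ × ℝ), f '' (finv '' P) = P)) ∧
    -- identities are sent to identities
    (∀ P : Set (ℝ × ℝ), (id : ℝ × ℝ → ℝ × ℝ) '' P = P) ∧
    -- compositions are sent to compositions
    (∀ (N : LoomPre) (g : ℝ × ℝ → ℝ × ℝ), IsLoom N → IsLoomIso M N g →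
      ∀ P : Set (ℝ × ℝ), (g ∘ f) '' P = g '' (f '' P)) := by
  obtain ⟨e, rfl⟩ := isHomeomorph_iff_exists_homeomorph.mp hf.1
  have hinj : Function.Injective ⇑e := e.injective
  have hdi := GF.dichotomy hL hM hf
  have hsymm_im : ∀ P : Set (ℝ × ℝ), ⇑e.symm '' (⇑e '' P) = P := fun P =>
    e.symm_image_image P
  have him_symm : ∀ P : Set (ℝ × ℝ), ⇑e '' (⇑e.symm '' P) = P := fun P => by
    rw [← Set.image_comp]; simp
  -- leaf-transport hypotheses in the two cases of the dichotomy
  have hor_no : (∀ p, ⇑e '' L.upLeaf p = M.upLeaf (e p) ∧ ⇑e '' L.loLeaf p = M.loLeaf (e p)) →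
      ∀ p q, q ∈ L.loLeaf p → e q ∈ M.loLeaf (e p) := fun hno p q hq => by
    have := Set.mem_image_of_mem ⇑e hq
    rwa [(hno p).2] at this
  have ver_no : (∀ p, ⇑e '' L.upLeaf p = M.upLeaf (e p) ∧ ⇑e '' L.loLeaf p = M.loLeaf (e p)) →
      ∀ p q, q ∈ L.upLeaf p → e q ∈ M.upLeaf (e p) := fun hno p q hq => by
    have := Set.mem_image_of_mem ⇑e hq
    rwa [(hno p).1] at this
  have hor_sw : (∀ p, ⇑e '' L.upLeaf p = M.loLeaf (e p) ∧ ⇑e '' L.loLeaf p = M.upLeaf (e p)) →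
      ∀ p q, q ∈ (GF.transpose L).loLeaf p → e q ∈ M.loLeaf (e p) := fun hsw p q hq => by
    have hq' : q ∈ L.upLeaf p := hq
    have := Set.mem_image_of_mem ⇑e hq'
    rwa [(hsw p).1] at this
  have ver_sw : (∀ p, ⇑e '' L.upLeaf p = M.loLeaf (e p) ∧ ⇑e '' L.loLeaf p = M.upLeaf (e p)) →
      ∀ p q, q ∈ (GF.transpose L).upLeaf p → e q ∈ M.upLeaf (e p) := fun hsw p q hq => by
    have hq' : q ∈ L.loLeaf p := hq
    have := Set.mem_image_of_mem ⇑e hq'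
    rwa [(hsw p).2] at this
  -- tetrahedron rectangles
  have tet : ∀ P, L.IsTetRect P → M.IsTetRect (⇑e '' P) := by
    rintro P ⟨a, b, c, d, hrect, ha, hb, hc, hd, F, G, hext⟩
    rcases hdi with hno | hsw
    · exact ⟨a, b, c, d, GF.rect_map e (hor_no hno) (ver_no hno) hrect, ha, hb, hc, hd,
        _, _, GF.rectext_map e (hor_no hno) (ver_no hno) hext⟩
    · refine ⟨d, c, b, a, GF.rect_map e (hor_sw hsw) (ver_sw hsw) (GF.rect_swap hrect),
        hd, hc, hb, ha, ⇑e ∘ (F ∘ Prod.swap), (Prod.swap ∘ G) ∘ ⇑e.symm, ?_⟩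
      have hkey := GF.rectext_map e (hor_sw hsw) (ver_sw hsw) (GF.rectext_swap hext)
      have hset : Prod.swap '' ({(a,(0:ℝ)), ((1:ℝ),b), (c,(1:ℝ)), ((0:ℝ),d)} : Set (ℝ × ℝ)) =
          {(d,(0:ℝ)), ((1:ℝ),c), (b,(1:ℝ)), ((0:ℝ),a)} := by
        simp only [Set.image_insert_eq, Set.image_singleton, Prod.swap_prod_mk]
        ext x
        simp only [Set.mem_insert_iff, Set.mem_singleton_iff]
        tauto
      rwa [hset] at hkey
  -- face rectangles
  have face : ∀ P, L.IsFaceRect P → M.IsFaceRect (⇑e '' P) := by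
    rintro P ⟨hrect, a, ha, b, hb, F, G, hcase⟩
    rcases hdi with hno | hsw
    · refine ⟨GF.rect_map e (hor_no hno) (ver_no hno) hrect, a, ha, b, hb,
        ⇑e ∘ F, G ∘ ⇑e.symm, ?_⟩
      rcases hcase with h | h | h | h
      · exact Or.inl (GF.rectext_map e (hor_no hno) (ver_no hno) h)
      · exact Or.inr (Or.inl (GF.rectext_map e (hor_no hno) (ver_no hno) h))
      · exact Or.inr (Or.inr (Or.inl (GF.rectext_map e (hor_no hno) (ver_no hno) h)))
      · exact Or.inr (Or.inr (Or.inr (GF.rectext_map e (hor_no hno) (ver_no hno) h)))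
    · refine ⟨GF.rect_map e (hor_sw hsw) (ver_sw hsw) (GF.rect_swap hrect), b, hb, a, ha,
        ⇑e ∘ (F ∘ Prod.swap), (Prod.swap ∘ G) ∘ ⇑e.symm, ?_⟩
      rcases hcase with h | h | h | h
      · -- corner (0,0) ↦ case 1
        refine Or.inl ?_
        have hkey := GF.rectext_map e (hor_sw hsw) (ver_sw hsw) (GF.rectext_swap h)
        have hset : Prod.swap '' ({((0:ℝ),(0:ℝ)), ((1:ℝ),a), (b,(1:ℝ))} : Set (ℝ × ℝ)) =
            {((0:ℝ),(0:ℝ)), ((1:ℝ),b), (a,(1:ℝ))} := by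
          simp only [Set.image_insert_eq, Set.image_singleton, Prod.swap_prod_mk]
          ext x
          simp only [Set.mem_insert_iff, Set.mem_singleton_iff]
          tauto
        rwa [hset] at hkey
      · -- corner (1,0) ↦ case 4
        refine Or.inr (Or.inr (Or.inr ?_))
        have hkey := GF.rectext_map e (hor_sw hsw) (ver_sw hsw) (GF.rectext_swap h)
        have hset : Prod.swap '' ({((1:ℝ),(0:ℝ)), ((0:ℝ),a), (b,(1:ℝ))} : Set (ℝ × ℝ)) =
            {((0:ℝ),(1:ℝ)), ((1:ℝ),b), (a,(0:ℝ))} := by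
          simp only [Set.image_insert_eq, Set.image_singleton, Prod.swap_prod_mk]
          ext x
          simp only [Set.mem_insert_iff, Set.mem_singleton_iff]
          tauto
        rwa [hset] at hkey
      · -- corner (1,1) ↦ case 3
        refine Or.inr (Or.inr (Or.inl ?_))
        have hkey := GF.rectext_map e (hor_sw hsw) (ver_sw hsw) (GF.rectext_swap h)
        have hset : Prod.swap '' ({((1:ℝ),(1:ℝ)), ((0:ℝ),a), (b,(0:ℝ))} : Set (ℝ × ℝ)) =
            {((1:ℝ),(1:ℝ)), ((0:ℝ),b), (a,(0:ℝ))} := by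
          simp only [Set.image_insert_eq, Set.image_singleton, Prod.swap_prod_mk]
          ext x
          simp only [Set.mem_insert_iff, Set.mem_singleton_iff]
          tauto
        rwa [hset] at hkey
      · -- corner (0,1) ↦ case 2
        refine Or.inr (Or.inl ?_)
        have hkey := GF.rectext_map e (hor_sw hsw) (ver_sw hsw) (GF.rectext_swap h)
        have hset : Prod.swap '' ({((0:ℝ),(1:ℝ)), ((1:ℝ),a), (b,(0:ℝ))} : Set (ℝ × ℝ)) =
            {((1:ℝ),(0:ℝ)), ((0:ℝ),b), (a,(1:ℝ))} := by
          simp only [Set.image_insert_eq, Set.image_singleton, Prod.swap_prod_mk]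
          ext x
          simp only [Set.mem_insert_iff, Set.mem_singleton_iff]
          tauto
        rwa [hset] at hkey
  -- edge rectangles
  have edge : ∀ P, L.IsEdgeRect P → M.IsEdgeRect (⇑e '' P) := by
    rintro P ⟨hrect, hcase⟩
    rcases hdi with hno | hsw
    · refine ⟨GF.rect_map e (hor_no hno) (ver_no hno) hrect, ?_⟩
      rcases hcase with ⟨F, G, h⟩ | ⟨F, G, h⟩
      · exact Or.inl ⟨_, _, GF.rectext_map e (hor_no hno) (ver_no hno) h⟩
      · exact Or.inr ⟨_, _, GF.rectext_map e (hor_no hno) (ver_no hno) h⟩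
    · refine ⟨GF.rect_map e (hor_sw hsw) (ver_sw hsw) (GF.rect_swap hrect), ?_⟩
      rcases hcase with ⟨F, G, h⟩ | ⟨F, G, h⟩
      · refine Or.inl ⟨⇑e ∘ (F ∘ Prod.swap), (Prod.swap ∘ G) ∘ ⇑e.symm, ?_⟩
        have hkey := GF.rectext_map e (hor_sw hsw) (ver_sw hsw) (GF.rectext_swap h)
        have hset : Prod.swap '' ({((0:ℝ),(0:ℝ)), ((1:ℝ),(1:ℝ))} : Set (ℝ × ℝ)) =
            {((0:ℝ),(0:ℝ)), ((1:ℝ),(1:ℝ))} := by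
          simp only [Set.image_insert_eq, Set.image_singleton, Prod.swap_prod_mk]
        rwa [hset] at hkey
      · refine Or.inr ⟨⇑e ∘ (F ∘ Prod.swap), (Prod.swap ∘ G) ∘ ⇑e.symm, ?_⟩
        have hkey := GF.rectext_map e (hor_sw hsw) (ver_sw hsw) (GF.rectext_swap h)
        have hset : Prod.swap '' ({((1:ℝ),(0:ℝ)), ((0:ℝ),(1:ℝ))} : Set (ℝ × ℝ)) =
            {((1:ℝ),(0:ℝ)), ((0:ℝ),(1:ℝ))} := by
          simp only [Set.image_insert_eq, Set.image_singleton, Prod.swap_prod_mk]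
          ext x
          simp only [Set.mem_insert_iff, Set.mem_singleton_iff]
          tauto
        rwa [hset] at hkey
  -- generic forward transport of the taut structure
  have spans_fwd : ∀ (L' M' : LoomPre) (g : ℝ × ℝ → ℝ × ℝ), IsLoomIso L' M' g →
      ∀ E P, Spans L' E P → Spans M' (g '' E) (g '' P) := by
    intro L' M' g hg E P hsp
    have hinj' : Function.Injective g := hg.1.bijective.injective
    rcases hsp with ⟨p, hpP, hsub⟩ | ⟨p, hpP, hsub⟩
    · rcases (hg.2 p).2 with h | h
      · exact Or.inr ⟨g p, Set.mem_image_of_mem g hpP, by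
          rw [← h, ← Set.image_inter hinj']; exact Set.image_mono hsub⟩
      · exact Or.inl ⟨g p, Set.mem_image_of_mem g hpP, by
          rw [← h, ← Set.image_inter hinj']; exact Set.image_mono hsub⟩
    · rcases (hg.2 p).1 with h | h
      · exact Or.inr ⟨g p, Set.mem_image_of_mem g hpP, by
          rw [← h, ← Set.image_inter hinj']; exact Set.image_mono hsub⟩
      · exact Or.inl ⟨g p, Set.mem_image_of_mem g hpP, by
          rw [← h, ← Set.image_inter hinj']; exact Set.image_mono hsub⟩
  -- the inverse is a loom isomorphism
  have hfinv : IsLoomIso M L ⇑e.symm := by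
    refine ⟨e.symm.isHomeomorph, fun q => ?_⟩
    rcases hdi with hno | hsw
    · obtain ⟨h1, h2⟩ := hno (e.symm q)
      rw [e.apply_symm_apply] at h1 h2
      exact ⟨Or.inl (by rw [← h1, hsymm_im]), Or.inr (by rw [← h2, hsymm_im])⟩
    · obtain ⟨h1, h2⟩ := hsw (e.symm q)
      rw [e.apply_symm_apply] at h1 h2
      exact ⟨Or.inr (by rw [← h2, hsymm_im]), Or.inl (by rw [← h1, hsymm_im])⟩
  refine ⟨tet, face, edge, ?_, ?_, ?_, ?_, ?_⟩
  · -- face pairings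
    intro P Q _ _ _ hface
    rw [← Set.image_inter hinj]
    exact face _ hface
  · -- taut structure
    intro E P _ _ _
    constructor
    · exact spans_fwd L M ⇑e hf E P
    · intro hsp
      have := spans_fwd M L ⇑e.symm hfinv _ _ hsp
      rwa [hsymm_im, hsymm_im] at this
  · -- inverse
    exact ⟨⇑e.symm, hfinv, hsymm_im, him_symm⟩
  · -- identity
    exact fun P => Set.image_id P
  · -- composition
    intro N g _ _ P
    exact Set.image_comp g ⇑e P
end
end
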